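/- Let d ≥ 1 be an integer, p > 1, and let q₀ be a real number with d < q₀ < d + 2p. For R > 0 define Φ_R : ℝ^d → ℝ by Φ_R(x) = (1 + ‖x/R‖²)^(−q₀/2), and let ΔΦ_R(x) = ∑_{i=1}^d ∂²Φ_R/∂x_i²(x) be its Laplacian. Then there exists a constant C > 0, independent of R, such that for all R > 0: ∫_{ℝ^d} Φ_R(x)^(−1/(p−1)) · |ΔΦ_R(x)|^(p/(p−1)) dx ≤ C · R^(d − 2p/(p−1)). -/

import Mathlib

open Real MeasureTheory

variable {d : ℕ}

local notation "E" => EuclideanSpace ℝ (Fin d)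

lemma upos (c : ℝ) (x : E) : (0:ℝ) < 1 + ‖c • x‖ ^ 2 := by positivity

lemma aux1 (c e : ℝ) (x : E) :
    HasFDerivAt (fun z : E => (1 + ‖c • z‖ ^ 2) ^ e)
      ((e * (1 + ‖c • x‖ ^ 2) ^ (e - 1) * (2 * c ^ 2)) • innerSL ℝ x) x := by
  have hf : HasFDerivAt (fun z : E => c • z) (c • ContinuousLinearMap.id ℝ E) x :=
    (hasFDerivAt_id x).const_smul c
  have h1 : HasFDerivAt (fun z : E => 1 + ‖c • z‖ ^ 2)
      ((2 * c ^ 2) • innerSL ℝ x) x := by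
    have := hf.norm_sq.const_add 1
    refine this.congr_fderiv ?_
    ext v
    simp [real_inner_smul_left, real_inner_smul_right]
    ring
  have := h1.rpow_const (p := e) (Or.inl (upos c x).ne')
  refine this.congr_fderiv ?_
  simp only [smul_smul]


lemma aux2 (c e : ℝ) (i : Fin d) (x : E) :
    fderiv ℝ (fun y : E => fderiv ℝ (fun z : E => (1 + ‖c • z‖ ^ 2) ^ e) y
        (EuclideanSpace.single i 1)) x (EuclideanSpace.single i 1)
      = 2 * c ^ 2 * e * ((1 + ‖c • x‖ ^ 2) ^ (e - 1)
          + (e - 1) * (1 + ‖c • x‖ ^ 2) ^ (e - 2) * (2 * c ^ 2) * x i ^ 2) := by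
  have hψ : (fun y : E => fderiv ℝ (fun z : E => (1 + ‖c • z‖ ^ 2) ^ e) y
      (EuclideanSpace.single i 1))
      = fun y : E => 2 * c ^ 2 * e * ((1 + ‖c • y‖ ^ 2) ^ (e - 1) * y i) := by
    funext y
    rw [(aux1 c e y).fderiv]
    simp [EuclideanSpace.inner_single_right, real_inner_comm]
    ring
  rw [hψ]
  have hproj : HasFDerivAt (fun y : E => y i) (EuclideanSpace.proj (𝕜 := ℝ) i) x :=
    (EuclideanSpace.proj (𝕜 := ℝ) i).hasFDerivAt
  have h := ((aux1 c (e - 1) x).mul hproj).const_mul (2 * c ^ 2 * e)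
  rw [show fderiv ℝ (fun y : E => 2 * c ^ 2 * e * ((1 + ‖c • y‖ ^ 2) ^ (e - 1) * y i)) x = _ from h.fderiv]
  simp [EuclideanSpace.inner_single_right, EuclideanSpace.single_apply, real_inner_comm]
  ring

lemma norm_sq_sum (x : E) : ∑ i : Fin d, x i ^ 2 = ‖x‖ ^ 2 := by
  rw [EuclideanSpace.norm_eq, Real.sq_sqrt (by positivity)]
  simp [Real.norm_eq_abs, sq_abs]

lemma lap (c e : ℝ) (x : E) :
    ∑ i : Fin d, fderiv ℝ (fun y : E => fderiv ℝ
        (fun z : E => (1 + ‖c • z‖ ^ 2) ^ e) y (EuclideanSpace.single i 1)) x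
        (EuclideanSpace.single i 1)
      = 2 * c ^ 2 * e * ((d : ℝ) * (1 + ‖c • x‖ ^ 2) ^ (e - 1)
          + (e - 1) * (1 + ‖c • x‖ ^ 2) ^ (e - 2) * (2 * c ^ 2) * ‖x‖ ^ 2) := by
  simp only [aux2]
  rw [← Finset.mul_sum, Finset.sum_add_distrib, Finset.sum_const, ← Finset.mul_sum,
    norm_sq_sum]
  simp

lemma lap_bound (c e : ℝ) (x : E) :
    |∑ i : Fin d, fderiv ℝ (fun y : E => fderiv ℝ
        (fun z : E => (1 + ‖c • z‖ ^ 2) ^ e) y (EuclideanSpace.single i 1)) x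
        (EuclideanSpace.single i 1)|
      ≤ 2 * |e| * ((d : ℝ) + 2 * |e - 1|) * c ^ 2 * (1 + ‖c • x‖ ^ 2) ^ (e - 1) := by
  rw [lap]
  set u : ℝ := 1 + ‖c • x‖ ^ 2 with hu
  have hu0 : (0 : ℝ) < u := by positivity
  have hA : (0 : ℝ) ≤ u ^ (e - 1) := Real.rpow_nonneg hu0.le _
  have hB : (0 : ℝ) ≤ u ^ (e - 2) := Real.rpow_nonneg hu0.le _
  have hcx : c ^ 2 * ‖x‖ ^ 2 = ‖c • x‖ ^ 2 := by
    rw [norm_smul, mul_pow]; simp [Real.norm_eq_abs, sq_abs]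
  have h1 : u ^ (e - 2) * (c ^ 2 * ‖x‖ ^ 2) ≤ u ^ (e - 1) := by
    calc u ^ (e - 2) * (c ^ 2 * ‖x‖ ^ 2) ≤ u ^ (e - 2) * u := by
          apply mul_le_mul_of_nonneg_left _ hB
          rw [hcx, hu]; nlinarith [sq_nonneg (‖c • x‖)]
      _ = u ^ (e - 1) := by
          rw [← Real.rpow_add_one hu0.ne' (e - 2), show e - 2 + 1 = e - 1 by ring]
  have h2 : |(d : ℝ) * u ^ (e - 1) + (e - 1) * u ^ (e - 2) * (2 * c ^ 2) * ‖x‖ ^ 2|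
      ≤ (d : ℝ) * u ^ (e - 1) + |e - 1| * (2 * u ^ (e - 1)) := by
    refine (abs_add_le _ _).trans (add_le_add ?_ ?_)
    · rw [abs_of_nonneg (by positivity)]
    · rw [abs_mul, abs_mul, abs_mul, abs_of_nonneg hB,
        abs_of_nonneg (by positivity : (0:ℝ) ≤ 2 * c ^ 2),
        abs_of_nonneg (by positivity : (0:ℝ) ≤ ‖x‖ ^ 2)]
      calc |e - 1| * u ^ (e - 2) * (2 * c ^ 2) * ‖x‖ ^ 2
          = |e - 1| * 2 * (u ^ (e - 2) * (c ^ 2 * ‖x‖ ^ 2)) := by ring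
        _ ≤ |e - 1| * 2 * u ^ (e - 1) := by
            exact mul_le_mul_of_nonneg_left h1 (by positivity)
        _ = |e - 1| * (2 * u ^ (e - 1)) := by ring
  calc |2 * c ^ 2 * e * ((d : ℝ) * u ^ (e - 1)
          + (e - 1) * u ^ (e - 2) * (2 * c ^ 2) * ‖x‖ ^ 2)|
      = 2 * c ^ 2 * |e| * |(d : ℝ) * u ^ (e - 1)
          + (e - 1) * u ^ (e - 2) * (2 * c ^ 2) * ‖x‖ ^ 2| := by
        rw [abs_mul, abs_mul, abs_mul, abs_two, abs_of_nonneg (sq_nonneg c)]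
    _ ≤ 2 * c ^ 2 * |e| * ((d : ℝ) * u ^ (e - 1) + |e - 1| * (2 * u ^ (e - 1))) :=
        mul_le_mul_of_nonneg_left h2 (by positivity)
    _ = 2 * |e| * ((d : ℝ) + 2 * |e - 1|) * c ^ 2 * u ^ (e - 1) := by ring

/-- Lemma 5 of the paper in the case `s = 1` (i.e. `δ = 2`): with
`Φ_R(x) = (1+‖x/R‖²)^(−q₀/2)`, `d < q₀ < d + 2p`, and `ΔΦ_R` its Laplacian
(sum of second partial derivatives), there is `C > 0` independent of `R` such that
`∫ Φ_R^(−1/(p−1)) |ΔΦ_R|^(p/(p−1)) dx ≤ C R^(d − 2p/(p−1))`. -/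
theorem stmt8 (d : ℕ) (hd : 1 ≤ d) (p q₀ : ℝ) (hp : 1 < p)
    (hq1 : (d : ℝ) < q₀) (hq2 : q₀ < (d : ℝ) + 2 * p) :
    ∃ C > 0, ∀ R > (0 : ℝ),
      ∫ x : EuclideanSpace ℝ (Fin d),
          ((1 + ‖R⁻¹ • x‖ ^ 2) ^ (-(q₀ / 2))) ^ (-(1 / (p - 1))) *
            |∑ i : Fin d,
                fderiv ℝ
                  (fun y => fderiv ℝ
                    (fun z : EuclideanSpace ℝ (Fin d) =>
                      (1 + ‖R⁻¹ • z‖ ^ 2) ^ (-(q₀ / 2))) y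
                    (EuclideanSpace.single i 1)) x (EuclideanSpace.single i 1)| ^
              (p / (p - 1)) ≤
        C * R ^ ((d : ℝ) - 2 * p / (p - 1)) := by
  have hp1 : (0:ℝ) < p - 1 := by linarith
  have hd0 : (0:ℝ) < (d:ℝ) := by exact_mod_cast hd
  set e : ℝ := -(q₀ / 2) with he
  set p' : ℝ := p / (p - 1) with hp'def
  have hp'0 : 0 < p' := div_pos (by linarith) hp1
  set K : ℝ := 2 * |e| * ((d : ℝ) + 2 * |e - 1|) + 1 with hK
  have hK0 : 0 < K := by positivity
  set r : ℝ := q₀ + 2 * p' with hr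
  have hrd : ((Module.finrank ℝ (EuclideanSpace ℝ (Fin d))) : ℝ) < r := by
    rw [finrank_euclideanSpace, Fintype.card_fin, hr]
    have : 0 < 2 * p' := by positivity
    linarith
  have hInt : Integrable (fun y : EuclideanSpace ℝ (Fin d) => (1 + ‖y‖ ^ 2) ^ (-r / 2)) :=
    integrable_rpow_neg_one_add_norm_sq hrd
  set I : ℝ := ∫ y : EuclideanSpace ℝ (Fin d), (1 + ‖y‖ ^ 2) ^ (-r / 2) with hI
  have hI0 : 0 ≤ I := integral_nonneg fun y => Real.rpow_nonneg (by positivity) _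
  refine ⟨K ^ p' * (I + 1), by positivity, fun R hR => ?_⟩
  have hc2 : (0:ℝ) < R⁻¹ ^ 2 := by positivity
  have hexp : e * -(1 / (p - 1)) + (e - 1) * p' = -r / 2 := by
    rw [hp'def, hr, he, hp'def]; field_simp; ring
  -- pointwise bound
  have hpt : ∀ x : EuclideanSpace ℝ (Fin d),
      ((1 + ‖R⁻¹ • x‖ ^ 2) ^ e) ^ (-(1 / (p - 1))) *
        |∑ i : Fin d, fderiv ℝ (fun y => fderiv ℝ
            (fun z : EuclideanSpace ℝ (Fin d) => (1 + ‖R⁻¹ • z‖ ^ 2) ^ e) y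
            (EuclideanSpace.single i 1)) x (EuclideanSpace.single i 1)| ^ p'
      ≤ K ^ p' * (R⁻¹ ^ 2) ^ p' * ((1 + ‖R⁻¹ • x‖ ^ 2) ^ (-r / 2)) := by
    intro x
    set u : ℝ := 1 + ‖R⁻¹ • x‖ ^ 2 with hu
    have hu0 : (0:ℝ) < u := by positivity
    have hb : |∑ i : Fin d, fderiv ℝ (fun y => fderiv ℝ
            (fun z : EuclideanSpace ℝ (Fin d) => (1 + ‖R⁻¹ • z‖ ^ 2) ^ e) y
            (EuclideanSpace.single i 1)) x (EuclideanSpace.single i 1)|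
        ≤ K * R⁻¹ ^ 2 * u ^ (e - 1) := by
      refine (lap_bound R⁻¹ e x).trans ?_
      have h' : 2 * |e| * ((d : ℝ) + 2 * |e - 1|) ≤ K := by rw [hK]; linarith
      have h2 : 2 * |e| * ((d : ℝ) + 2 * |e - 1|) * R⁻¹ ^ 2 ≤ K * R⁻¹ ^ 2 :=
        mul_le_mul_of_nonneg_right h' hc2.le
      exact mul_le_mul_of_nonneg_right h2 (Real.rpow_nonneg hu0.le _)
    have h2 : |∑ i : Fin d, fderiv ℝ (fun y => fderiv ℝ
            (fun z : EuclideanSpace ℝ (Fin d) => (1 + ‖R⁻¹ • z‖ ^ 2) ^ e) y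
            (EuclideanSpace.single i 1)) x (EuclideanSpace.single i 1)| ^ p'
        ≤ (K * R⁻¹ ^ 2 * u ^ (e - 1)) ^ p' :=
      Real.rpow_le_rpow (abs_nonneg _) hb hp'0.le
    calc ((u) ^ e) ^ (-(1 / (p - 1))) *
          |∑ i : Fin d, fderiv ℝ (fun y => fderiv ℝ
              (fun z : EuclideanSpace ℝ (Fin d) => (1 + ‖R⁻¹ • z‖ ^ 2) ^ e) y
              (EuclideanSpace.single i 1)) x (EuclideanSpace.single i 1)| ^ p'
        ≤ ((u) ^ e) ^ (-(1 / (p - 1))) * (K * R⁻¹ ^ 2 * u ^ (e - 1)) ^ p' :=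
          mul_le_mul_of_nonneg_left h2
            (Real.rpow_nonneg (Real.rpow_nonneg hu0.le _) _)
      _ = K ^ p' * (R⁻¹ ^ 2) ^ p' * (u ^ (e * -(1 / (p - 1))) * u ^ ((e - 1) * p')) := by
          rw [← Real.rpow_mul hu0.le,
            Real.mul_rpow (by positivity) (Real.rpow_nonneg hu0.le _),
            Real.mul_rpow hK0.le hc2.le, ← Real.rpow_mul hu0.le]
          ring
      _ = K ^ p' * (R⁻¹ ^ 2) ^ p' * u ^ (-r / 2) := by
          rw [← Real.rpow_add hu0, hexp]
  have hdom : Integrable (fun x : EuclideanSpace ℝ (Fin d) =>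
      K ^ p' * (R⁻¹ ^ 2) ^ p' * ((1 + ‖R⁻¹ • x‖ ^ 2) ^ (-r / 2))) := by
    have : Integrable (fun x : EuclideanSpace ℝ (Fin d) =>
        (1 + ‖R⁻¹ • x‖ ^ 2) ^ (-r / 2)) :=
      hInt.comp_smul (inv_ne_zero hR.ne')
    exact this.const_mul _
  refine le_trans (integral_mono_of_nonneg (ae_of_all _ fun x => by positivity)
    hdom (ae_of_all _ hpt)) ?_
  rw [MeasureTheory.integral_const_mul]
  have hcv : (∫ x : EuclideanSpace ℝ (Fin d), (1 + ‖R⁻¹ • x‖ ^ 2) ^ (-r / 2))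
      = |R ^ Module.finrank ℝ (EuclideanSpace ℝ (Fin d))| • I :=
    MeasureTheory.Measure.integral_comp_inv_smul volume
      (fun y : EuclideanSpace ℝ (Fin d) => (1 + ‖y‖ ^ 2) ^ (-r / 2)) R
  rw [hcv, finrank_euclideanSpace, Fintype.card_fin, smul_eq_mul,
    abs_of_nonneg (pow_nonneg hR.le _)]
  have hRid : (R⁻¹ ^ 2) ^ p' * R ^ (d : ℕ) = R ^ ((d : ℝ) - 2 * p / (p - 1)) := by
    have h1 : (R⁻¹ ^ 2 : ℝ) = R ^ (-2 : ℝ) := by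
      rw [Real.rpow_neg hR.le, show ((2:ℝ)) = ((2:ℕ):ℝ) by norm_num,
        Real.rpow_natCast]
      exact inv_pow R 2
    rw [h1, ← Real.rpow_natCast R d, ← Real.rpow_mul hR.le, ← Real.rpow_add hR]
    congr 1
    rw [hp'def]
    push_cast
    ring
  calc K ^ p' * (R⁻¹ ^ 2) ^ p' * (R ^ (d : ℕ) * I)
      = K ^ p' * I * ((R⁻¹ ^ 2) ^ p' * R ^ (d : ℕ)) := by ring
    _ = K ^ p' * I * R ^ ((d : ℝ) - 2 * p / (p - 1)) := by rw [hRid]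
    _ ≤ K ^ p' * (I + 1) * R ^ ((d : ℝ) - 2 * p / (p - 1)) := by
        apply mul_le_mul_of_nonneg_right _ (Real.rpow_nonneg hR.le _)
        exact mul_le_mul_of_nonneg_left (by linarith) (Real.rpow_nonneg hK0.le _)
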